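/- In the Bernoulli example with hierarchical interval weakening S_ω(U) = ∏_{i=1}^n [U_i - ωU_i, U_i + ω(1-U_i)], the weakened posterior focal element given success count N is the interval M_N(U; S_ω) = [U_(N) - ωU_(N), U_(N+1) + ω(1 - U_(N+1))], i.e., the union over u ∈ S_ω(U) of the intervals [u_(N), u_(N+1)] equals this enlarged interval. -/

import Mathlib

/-- The `k`-th order statistic of `u : Fin n → ℝ` for `k = 1,…,n`, with the conventions
`u_(0) = 0` and `u_(k) = 1` for `k > n`. -/
noncomputable def ostat (n : ℕ) (u : Fin n → ℝ) (k : ℕ) : ℝ :=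
  if k = 0 then 0
  else if n < k then 1
  else ((List.ofFn u).insertionSort (· ≤ ·)).getD (k - 1) 0

open List

lemma sort_ofFn_eq {n : ℕ} (u : Fin n → ℝ) :
    (List.ofFn u).insertionSort (· ≤ ·) = List.ofFn (u ∘ Tuple.sort u) := by
  exact List.Perm.eq_of_pairwise'
    (List.pairwise_insertionSort _ _)
    (List.pairwise_ofFn.mpr fun i j hij => Tuple.monotone_sort u hij.le)
    ((List.perm_insertionSort _ _).trans ((Tuple.sort u).ofFn_comp_perm u).symm)

lemma sorted_mono {n : ℕ} {u v : Fin n → ℝ} (h : ∀ i, u i ≤ v i) (j : Fin n) :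
    (u ∘ Tuple.sort u) j ≤ (v ∘ Tuple.sort v) j := by
  classical
  set a := (v ∘ Tuple.sort v) j with ha
  have hv := Tuple.lt_card_le_iff_apply_le_of_monotone (f := v ∘ Tuple.sort v) (a := a)
    (Tuple.monotone_sort v) (j := j)
  have hu := Tuple.lt_card_le_iff_apply_le_of_monotone (f := u ∘ Tuple.sort u) (a := a)
    (Tuple.monotone_sort u) (j := j)
  rw [← hu, ← Fintype.card_subtype]
  calc (j : ℕ) < Fintype.card {i // (v ∘ Tuple.sort v) i ≤ a} := by
        rw [Fintype.card_subtype]; exact hv.mpr le_rfl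
    _ = Fintype.card {i // v i ≤ a} :=
        Fintype.card_congr (((Tuple.sort v) : Equiv.Perm (Fin n)).subtypeEquiv fun i => Iff.rfl)
    _ ≤ Fintype.card {i // u i ≤ a} :=
        Fintype.card_subtype_mono _ _ fun i hi => (h i).trans hi
    _ = Fintype.card {i // (u ∘ Tuple.sort u) i ≤ a} :=
        (Fintype.card_congr (((Tuple.sort u) : Equiv.Perm (Fin n)).subtypeEquiv fun i => Iff.rfl)).symm

lemma map_sort {n : ℕ} (u : Fin n → ℝ) (φ : ℝ → ℝ) (hφ : Monotone φ) :
    (List.ofFn fun i => φ (u i)).insertionSort (· ≤ ·) =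
      ((List.ofFn u).insertionSort (· ≤ ·)).map φ := by
  have hperm : (List.ofFn fun i => φ (u i)) ~ ((List.ofFn u).insertionSort (· ≤ ·)).map φ := by
    rw [show (List.ofFn fun i => φ (u i)) = (List.ofFn u).map φ from
      (List.map_ofFn (f := u) (g := φ)).symm]
    exact (((List.perm_insertionSort _ _)).map φ).symm
  exact List.Perm.eq_of_pairwise'
    (List.pairwise_insertionSort _ _)
    (List.Pairwise.map φ (fun a b hab => hφ hab) (List.pairwise_insertionSort _ _))
    ((List.perm_insertionSort _ _).trans hperm)

lemma ostat_comp {n : ℕ} (u : Fin n → ℝ) (φ : ℝ → ℝ) (hφ : Monotone φ)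
    {k : ℕ} (h1 : k ≠ 0) (h2 : k ≤ n) :
    ostat n (fun i => φ (u i)) k = φ (ostat n u k) := by
  have hn : ¬ n < k := by omega
  have hlen : k - 1 < ((List.ofFn u).insertionSort (· ≤ ·)).length := by
    rw [List.length_insertionSort, List.length_ofFn]; omega
  unfold ostat
  rw [if_neg h1, if_neg hn, if_neg h1, if_neg hn, map_sort u φ hφ,
    List.getD_eq_getElem _ _ (by simpa using hlen), List.getD_eq_getElem _ _ hlen,
    List.getElem_map]

lemma ostat_mono {n : ℕ} {u v : Fin n → ℝ} (h : ∀ i, u i ≤ v i) (k : ℕ) :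
    ostat n u k ≤ ostat n v k := by
  unfold ostat
  split_ifs with h0 hn
  · exact le_rfl
  · exact le_rfl
  · have hlen : ∀ w : Fin n → ℝ, k - 1 < ((List.ofFn w).insertionSort (· ≤ ·)).length := by
      intro w; rw [List.length_insertionSort, List.length_ofFn]; omega
    rw [List.getD_eq_getElem _ _ (hlen u), List.getD_eq_getElem _ _ (hlen v)]
    have hu := sort_ofFn_eq u
    have hv := sort_ofFn_eq v
    simp only [hu, hv, List.getElem_ofFn]
    exact sorted_mono h _

lemma ostat_lt {n : ℕ} (U : Fin n → ℝ) (hinj : Function.Injective U)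
    {k : ℕ} (h1 : k ≠ 0) (h2 : k + 1 ≤ n) : ostat n U k < ostat n U (k + 1) := by
  set L := (List.ofFn U).insertionSort (· ≤ ·) with hL
  have hlen : L.length = n := by rw [hL, List.length_insertionSort, List.length_ofFn]
  have hnd : L.Nodup := (List.perm_insertionSort _ _).nodup_iff.mpr
    ((List.nodup_ofFn).mpr hinj)
  have hs : L.Pairwise (· ≤ ·) := List.pairwise_insertionSort _ _
  have hlt : L.Pairwise (· < ·) := by
    refine (hs.and hnd).imp ?_
    rintro a b ⟨hab, hne⟩
    exact lt_of_le_of_ne hab hne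
  have hk1 : k - 1 < L.length := by omega
  have hk2 : k + 1 - 1 < L.length := by omega
  have := List.pairwise_iff_get.mp hlt ⟨k - 1, hk1⟩ ⟨k + 1 - 1, hk2⟩ (by simp; omega)
  unfold ostat
  rw [if_neg h1, if_neg (by omega), if_neg (by omega), if_neg (by omega), ← hL,
    List.getD_eq_getElem _ _ hk1, List.getD_eq_getElem _ _ hk2]
  simpa using this

/-- in the Bernoulli example with interval weakening
`S_ω(U) = ∏_i [U_i - ωU_i, U_i + ω(1-U_i)]`, the weakened posterior focal element
given success count `N` is the enlarged interval
`[U_(N) - ωU_(N), U_(N+1) + ω(1-U_(N+1))]`. -/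
theorem bernoulli_weakened_focal_element
    (n : ℕ) (U : Fin n → ℝ) (hU : ∀ i, U i ∈ Set.Icc (0:ℝ) 1)
    (hinj : Function.Injective U)
    (ω : ℝ) (hω : ω ∈ Set.Icc (0:ℝ) 1)
    (N : ℕ) (hN : N ≤ n) :
    (⋃ u ∈ {u : Fin n → ℝ |
        ∀ i, u i ∈ Set.Icc (U i - ω * U i) (U i + ω * (1 - U i))},
      Set.Icc (ostat n u N) (ostat n u (N + 1))) =
    Set.Icc (ostat n U N - ω * ostat n U N)
      (ostat n U (N + 1) + ω * (1 - ostat n U (N + 1))) := by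
  obtain ⟨hω0, hω1⟩ := hω
  have hmono_lo : Monotone (fun v : ℝ => v - ω * v) := by
    intro a b hab; simp only; nlinarith
  have hmono_hi : Monotone (fun v : ℝ => v + ω * (1 - v)) := by
    intro a b hab; simp only; nlinarith
  ext x
  simp only [Set.mem_iUnion, Set.mem_setOf_eq, Set.mem_Icc, exists_prop]
  constructor
  · rintro ⟨u, hu, hx1, hx2⟩
    constructor
    · -- lower bound
      have h1 : ostat n U N - ω * ostat n U N ≤ ostat n u N := by
        rcases Nat.eq_zero_or_pos N with h0 | h0
        · subst h0
          simp [ostat]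
        · have hc : ostat n (fun i => U i - ω * U i) N = ostat n U N - ω * ostat n U N :=
            ostat_comp U (fun v => v - ω * v) hmono_lo (by omega) hN
          rw [← hc]
          exact ostat_mono (fun i => (hu i).1) N
      linarith
    · -- upper bound
      have h2 : ostat n u (N + 1) ≤ ostat n U (N + 1) + ω * (1 - ostat n U (N + 1)) := by
        rcases lt_or_ge n (N + 1) with hn1 | hn1
        · have hu1 : ostat n u (N + 1) = 1 := by simp [ostat, hn1]
          have hU1 : ostat n U (N + 1) = 1 := by simp [ostat, hn1]
          rw [hu1, hU1]; ring_nf; linarith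
        · have hc : ostat n (fun i => U i + ω * (1 - U i)) (N + 1) =
              ostat n U (N + 1) + ω * (1 - ostat n U (N + 1)) :=
            ostat_comp U (fun v => v + ω * (1 - v)) hmono_hi (by omega) hn1
          rw [← hc]
          exact ostat_mono (fun i => (hu i).2) (N + 1)
      linarith
  · rintro ⟨hx1, hx2⟩
    set c := ostat n U N with hc
    set ψ : ℝ → ℝ := fun v => if N ≠ 0 ∧ v ≤ c then v - ω * v else v + ω * (1 - v) with hψ
    have hψmono : Monotone ψ := by
      intro a b hab
      simp only [hψ]
      by_cases hb : N ≠ 0 ∧ b ≤ c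
      · rw [if_pos ⟨hb.1, hab.trans hb.2⟩, if_pos hb]
        nlinarith
      · rw [if_neg hb]
        by_cases ha : N ≠ 0 ∧ a ≤ c
        · rw [if_pos ha]; nlinarith
        · rw [if_neg ha]; nlinarith
    refine ⟨fun i => ψ (U i), fun i => ?_, ?_, ?_⟩
    · simp only [hψ, Set.mem_Icc]
      split_ifs with h
      · exact ⟨le_rfl, by nlinarith⟩
      · exact ⟨by nlinarith, le_rfl⟩
    · -- ostat n (ψ ∘ U) N = lower endpoint, and x ≥ it
      have h1 : ostat n (fun i => ψ (U i)) N = ostat n U N - ω * ostat n U N := by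
        rcases Nat.eq_zero_or_pos N with h0 | h0
        · subst h0; simp [ostat]
        · rw [ostat_comp U ψ hψmono (by omega) hN]
          simp only [hψ]
          rw [if_pos ⟨by omega, le_rfl⟩]
      rw [h1]; exact hx1
    · have h2 : ostat n (fun i => ψ (U i)) (N + 1) =
          ostat n U (N + 1) + ω * (1 - ostat n U (N + 1)) := by
        rcases lt_or_ge n (N + 1) with hn1 | hn1
        · have := hω1
          simp [ostat, hn1]
        · rw [ostat_comp U ψ hψmono (by omega) hn1]
          simp only [hψ]
          rw [if_neg ?_]
          rintro ⟨hN0, hle⟩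
          have := ostat_lt U hinj (k := N) hN0 hn1
          rw [← hc] at this
          linarith
      rw [h2]; exact hx2
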